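/- If 0 < w_D < ∞, then the dual value function v is w_D-Lipschitz on (0,∞): |v(y₁) − v(y₂)| ≤ w_D·|y₁ − y₂| for all y₁, y₂ > 0; in particular, v is uniformly continuous on (0,∞). -/

import Mathlib

open MeasureTheory Set Filter
open scoped ENNReal NNReal Topology

/-- The convex dual `Ũ(y) := sup_{0 ≤ z ≤ H} (U(z) − y·z)` (for a fixed state). -/
noncomputable def dualU (U : ℝ → ℝ) (H y : ℝ) : ℝ :=
  sSup ((fun z => U z - y * z) '' Set.Icc 0 H)

/-- `min(I(y), H)`, where `I(y) := inf{ z ∈ (0,H) : U'(z) < y }` with the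
conventions `inf ∅ = +∞` and `I(0) = +∞` (so that the minimum with `H`
equals `H` in those cases). -/
noncomputable def IminU (U : ℝ → ℝ) (H y : ℝ) : ℝ :=
  sInf ({z | z ∈ Set.Ioo 0 H ∧ deriv U z < y} ∪ {H})

/-- The dual value function `v(y) := inf_{ξ ∈ D} E[Ũ(y·ξ(·), ·)]`. -/
noncomputable def dualValue {Ω : Type*} [MeasurableSpace Ω] (μ : Measure Ω)
    (U : Ω → ℝ → ℝ) (H : Ω → ℝ) (D : Set (Ω → ℝ)) (y : ℝ) : ℝ :=
  sInf ((fun ξ => ∫ ω, dualU (U ω) (H ω) (y * ξ ω) ∂μ) '' D)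

/-- `w_D := sup_{ξ ∈ D} E[ξ·H]` (as an extended nonnegative real). -/
noncomputable def wDual {Ω : Type*} [MeasurableSpace Ω] (μ : Measure Ω)
    (H : Ω → ℝ) (D : Set (Ω → ℝ)) : ℝ≥0∞ :=
  ⨆ ξ ∈ D, ∫⁻ ω, ENNReal.ofReal (ξ ω * H ω) ∂μ

section Aux

variable {f : ℝ → ℝ} {H t t₁ t₂ : ℝ}

lemma dualU_bound (hmono : MonotoneOn f (Set.Ici 0)) (hH : 0 ≤ H) (ht : 0 ≤ t) :
    ∀ x ∈ (fun z => f z - t * z) '' Set.Icc 0 H, x ≤ f H := by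
  rintro x ⟨z, hz, rfl⟩
  have h1 : f z ≤ f H := hmono hz.1 hH hz.2
  have h2 : 0 ≤ t * z := mul_nonneg ht hz.1
  simp only; linarith

lemma dualU_ne (hH : 0 ≤ H) :
    ((fun z => f z - t * z) '' Set.Icc 0 H).Nonempty :=
  ⟨f 0 - t * 0, ⟨0, Set.left_mem_Icc.2 hH, rfl⟩⟩

lemma dualU_bdd (hmono : MonotoneOn f (Set.Ici 0)) (hH : 0 ≤ H) (ht : 0 ≤ t) :
    BddAbove ((fun z => f z - t * z) '' Set.Icc 0 H) :=
  ⟨f H, dualU_bound hmono hH ht⟩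

lemma dualU_le (hmono : MonotoneOn f (Set.Ici 0)) (hH : 0 ≤ H) (ht : 0 ≤ t) :
    dualU f H t ≤ f H :=
  csSup_le (dualU_ne hH) (dualU_bound hmono hH ht)

lemma le_dualU (hmono : MonotoneOn f (Set.Ici 0)) (hH : 0 ≤ H) (ht : 0 ≤ t) :
    f 0 ≤ dualU f H t := by
  have := le_csSup (dualU_bdd hmono hH ht) (⟨0, Set.left_mem_Icc.2 hH, rfl⟩ :
    f 0 - t * 0 ∈ (fun z => f z - t * z) '' Set.Icc 0 H)
  simpa [dualU] using this

lemma dualU_lip (hmono : MonotoneOn f (Set.Ici 0)) (hH : 0 ≤ H)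
    (ht₁ : 0 ≤ t₁) (ht₂ : 0 ≤ t₂) :
    dualU f H t₁ ≤ dualU f H t₂ + H * |t₁ - t₂| := by
  apply csSup_le (dualU_ne hH)
  rintro x ⟨z, hz, rfl⟩
  have h1 : f z - t₂ * z ≤ dualU f H t₂ :=
    le_csSup (dualU_bdd hmono hH ht₂) ⟨z, hz, rfl⟩
  have h2 : (t₂ - t₁) * z ≤ |t₁ - t₂| * H := by
    calc (t₂ - t₁) * z ≤ |t₂ - t₁| * z := mul_le_mul_of_nonneg_right (le_abs_self _) hz.1
    _ = |t₁ - t₂| * z := by rw [abs_sub_comm]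
    _ ≤ |t₁ - t₂| * H := mul_le_mul_of_nonneg_left hz.2 (abs_nonneg _)
  have h3 : f z - t₁ * z = (f z - t₂ * z) + (t₂ - t₁) * z := by ring
  simp only
  rw [h3, mul_comm H]
  linarith

lemma dualU_eq_iSup (hmono : MonotoneOn f (Set.Ici 0))
    (hcont : ContinuousOn f (Set.Ici 0)) (hH : 0 < H) (ht : 0 ≤ t) :
    dualU f H t = ⨆ q : ℚ, (if (q : ℝ) ∈ Set.Icc 0 H then f q - t * q else f 0) := by
  set F : ℚ → ℝ := fun q => if (q : ℝ) ∈ Set.Icc 0 H then f q - t * q else f 0 with hF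
  have hf0H : f 0 ≤ f H := hmono (Set.mem_Ici.2 le_rfl) hH.le hH.le
  have hbddF : BddAbove (Set.range F) := by
    refine ⟨f H, ?_⟩
    rintro x ⟨q, rfl⟩
    simp only [hF]
    split_ifs with h
    · exact dualU_bound hmono hH.le ht _ ⟨q, h, rfl⟩
    · exact hf0H
  apply le_antisymm
  · apply csSup_le (dualU_ne hH.le)
    rintro x ⟨z, hz, rfl⟩
    apply le_of_forall_pos_le_add
    intro ε hε
    have hgc : ContinuousWithinAt (fun w => f w - t * w) (Set.Icc 0 H) z :=
      ((hcont.mono Set.Icc_subset_Ici_self).sub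
        ((continuous_const.mul continuous_id).continuousOn)) z hz
    rw [Metric.continuousWithinAt_iff] at hgc
    obtain ⟨δ, hδ, hball⟩ := hgc ε hε
    have hlt : max 0 (z - δ) < min H (z + δ) :=
      max_lt (lt_min hH (by linarith [hz.1])) (lt_min (by linarith [hz.2]) (by linarith))
    obtain ⟨q, hq1, hq2⟩ := exists_rat_btwn hlt
    have hqmem : (q : ℝ) ∈ Set.Icc 0 H :=
      ⟨((le_max_left 0 (z - δ)).trans_lt hq1).le, (hq2.trans_le (min_le_left H (z + δ))).le⟩
    have hq1' : z - δ < (q : ℝ) := (le_max_right 0 (z - δ)).trans_lt hq1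
    have hq2' : (q : ℝ) < z + δ := hq2.trans_le (min_le_right H (z + δ))
    have hdist : dist (q : ℝ) z < δ := by
      rw [Real.dist_eq, abs_lt]; constructor <;> linarith
    have hd := hball hqmem hdist
    rw [Real.dist_eq, abs_lt] at hd
    have hFq : F q = f q - t * q := if_pos hqmem
    calc f z - t * z ≤ F q + ε := by rw [hFq]; linarith [hd.2]
      _ ≤ (⨆ q : ℚ, F q) + ε := add_le_add_left (le_ciSup hbddF q) ε
  · apply ciSup_le
    intro q
    simp only [hF]
    split_ifs with h
    · exact le_csSup (dualU_bdd hmono hH.le ht) ⟨q, h, rfl⟩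
    · exact le_dualU hmono hH.le ht

end Aux

section MainAux

variable {Ω : Type*} [MeasurableSpace Ω] {μ : Measure Ω}

lemma dualU_meas {H : Ω → ℝ} (hHmeas : Measurable H) (hHpos : ∀ ω, 0 < H ω)
    {U : Ω → ℝ → ℝ} (hUmono : ∀ ω, MonotoneOn (U ω) (Set.Ici 0))
    (hUcont : ∀ ω, ContinuousOn (U ω) (Set.Ici 0))
    (hUmeas : ∀ z, Measurable fun ω => U ω z)
    {ξ : Ω → ℝ} (hξ : Measurable ξ) (hξ0 : ∀ ω, 0 ≤ ξ ω) {y : ℝ} (hy : 0 ≤ y) :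
    Measurable fun ω => dualU (U ω) (H ω) (y * ξ ω) := by
  have heq : (fun ω => dualU (U ω) (H ω) (y * ξ ω)) = fun ω =>
      ⨆ q : ℚ, (if (q : ℝ) ∈ Set.Icc 0 (H ω) then U ω q - (y * ξ ω) * q else U ω 0) :=
    funext fun ω => dualU_eq_iSup (hUmono ω) (hUcont ω) (hHpos ω)
      (mul_nonneg hy (hξ0 ω))
  rw [heq]
  apply Measurable.iSup
  intro q
  apply Measurable.ite
  · have : {ω | (q : ℝ) ∈ Set.Icc 0 (H ω)} =
        {ω | (0 : ℝ) ≤ (q : ℝ)} ∩ {ω | (q : ℝ) ≤ H ω} := by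
      ext ω; simp [Set.mem_Icc]
    rw [this]
    exact MeasurableSet.inter (MeasurableSet.const _)
      (measurableSet_le measurable_const hHmeas)
  · exact (hUmeas q).sub (((measurable_const.mul hξ).mul measurable_const))
  · exact hUmeas 0

end MainAux

/-- If `0 < w_D < ∞`, then the dual value function `v` is `w_D`-Lipschitz on
`(0,∞)`: `|v(y₁) − v(y₂)| ≤ w_D·|y₁ − y₂|` for all `y₁, y₂ > 0`. -/
theorem stmt7 {Ω : Type*} [MeasurableSpace Ω] (μ : Measure Ω) [IsProbabilityMeasure μ]
    (H : Ω → ℝ) (hHmeas : Measurable H) (hHpos : ∀ ω, 0 < H ω)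
    (U : Ω → ℝ → ℝ)
    (hU0 : ∀ ω, ∀ z, 0 ≤ z → 0 ≤ U ω z)
    (hUmono : ∀ ω, MonotoneOn (U ω) (Set.Ici 0))
    (hUcont : ∀ ω, ContinuousOn (U ω) (Set.Ici 0))
    (hUconc : ∀ ω, StrictConcaveOn ℝ (Set.Ioo 0 (H ω)) (U ω))
    (hUdiff : ∀ ω, ∀ z ∈ Set.Ioo 0 (H ω), DifferentiableAt ℝ (U ω) z)
    (hUcap : ∀ ω, ∀ w, 0 ≤ w → U ω w = U ω (min w (H ω)))
    (hUmeas : ∀ z, Measurable fun ω => U ω z)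
    (hUint : Integrable (fun ω => U ω (H ω)) μ)
    (D : Set (Ω → ℝ)) (hDne : D.Nonempty)
    (hDmeas : ∀ ξ ∈ D, Measurable ξ)
    (hDpos : ∀ ξ ∈ D, ∀ ω, 0 ≤ ξ ω)
    (hw0 : 0 < wDual μ H D) (hwtop : wDual μ H D < ⊤) :
    ∀ y₁ y₂ : ℝ, 0 < y₁ → 0 < y₂ →
      |dualValue μ U H D y₁ - dualValue μ U H D y₂| ≤
        (wDual μ H D).toReal * |y₁ - y₂| := by
  set w : ℝ := (wDual μ H D).toReal with hw
  -- integrability of the dual integrand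
  have hDint : ∀ ξ ∈ D, ∀ y : ℝ, 0 ≤ y →
      Integrable (fun ω => dualU (U ω) (H ω) (y * ξ ω)) μ := by
    intro ξ hξ y hy
    have hmeas := dualU_meas hHmeas hHpos hUmono hUcont hUmeas (hDmeas ξ hξ)
      (hDpos ξ hξ) hy
    apply hUint.mono' hmeas.aestronglyMeasurable
    filter_upwards with ω
    have hyξ : 0 ≤ y * ξ ω := mul_nonneg hy (hDpos ξ hξ ω)
    have h1 : dualU (U ω) (H ω) (y * ξ ω) ≤ U ω (H ω) :=
      dualU_le (hUmono ω) (hHpos ω).le hyξ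
    have h2 : U ω 0 ≤ dualU (U ω) (H ω) (y * ξ ω) :=
      le_dualU (hUmono ω) (hHpos ω).le hyξ
    have h0 : 0 ≤ U ω 0 := hU0 ω 0 le_rfl
    rw [Real.norm_eq_abs, abs_le]
    constructor <;> linarith
  -- integrability and bound for ξ·H
  have hξHint : ∀ ξ ∈ D, Integrable (fun ω => ξ ω * H ω) μ := by
    intro ξ hξ
    have hm : Measurable fun ω => ξ ω * H ω := (hDmeas ξ hξ).mul hHmeas
    refine ⟨hm.aestronglyMeasurable, ?_⟩
    rw [HasFiniteIntegral]
    have heq : ∀ ω, (‖ξ ω * H ω‖₊ : ℝ≥0∞) = ENNReal.ofReal (ξ ω * H ω) := fun ω =>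
      Real.enorm_eq_ofReal (mul_nonneg (hDpos ξ hξ ω) (hHpos ω).le)
    calc ∫⁻ ω, (‖ξ ω * H ω‖₊ : ℝ≥0∞) ∂μ = ∫⁻ ω, ENNReal.ofReal (ξ ω * H ω) ∂μ := by
          simp_rw [heq]
      _ ≤ wDual μ H D := by
          rw [show wDual μ H D = ⨆ ζ ∈ D, ∫⁻ ω, ENNReal.ofReal (ζ ω * H ω) ∂μ from rfl]
          exact le_biSup (f := fun ζ => ∫⁻ ω, ENNReal.ofReal (ζ ω * H ω) ∂μ) hξ
      _ < ⊤ := hwtop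
  have hξHle : ∀ ξ ∈ D, ∫ ω, ξ ω * H ω ∂μ ≤ w := by
    intro ξ hξ
    have hm : Measurable fun ω => ξ ω * H ω := (hDmeas ξ hξ).mul hHmeas
    rw [integral_eq_lintegral_of_nonneg_ae
      (Filter.Eventually.of_forall fun ω => mul_nonneg (hDpos ξ hξ ω) (hHpos ω).le)
      hm.aestronglyMeasurable]
    apply ENNReal.toReal_mono hwtop.ne
    rw [show wDual μ H D = ⨆ ζ ∈ D, ∫⁻ ω, ENNReal.ofReal (ζ ω * H ω) ∂μ from rfl]
    exact le_biSup (f := fun ζ => ∫⁻ ω, ENNReal.ofReal (ζ ω * H ω) ∂μ) hξ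
  -- lower bound 0 on the integrals
  have hbelow : ∀ y : ℝ, 0 ≤ y →
      ∀ x ∈ (fun ξ => ∫ ω, dualU (U ω) (H ω) (y * ξ ω) ∂μ) '' D, (0 : ℝ) ≤ x := by
    rintro y hy x ⟨ξ, hξ, rfl⟩
    apply integral_nonneg
    intro ω
    have hyξ : 0 ≤ y * ξ ω := mul_nonneg hy (hDpos ξ hξ ω)
    exact (hU0 ω 0 le_rfl).trans (le_dualU (hUmono ω) (hHpos ω).le hyξ)
  -- key one-sided estimate
  have key : ∀ a b : ℝ, 0 < a → 0 < b →
      dualValue μ U H D a ≤ dualValue μ U H D b + w * |a - b| := by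
    intro a b ha hb
    unfold dualValue
    have hneB : ((fun ξ => ∫ ω, dualU (U ω) (H ω) (b * ξ ω) ∂μ) '' D).Nonempty :=
      hDne.image _
    have h : sInf ((fun ξ => ∫ ω, dualU (U ω) (H ω) (a * ξ ω) ∂μ) '' D) - w * |a - b| ≤
        sInf ((fun ξ => ∫ ω, dualU (U ω) (H ω) (b * ξ ω) ∂μ) '' D) := by
      apply le_csInf hneB
      rintro x ⟨ξ, hξ, rfl⟩
      have hstep : ∫ ω, dualU (U ω) (H ω) (a * ξ ω) ∂μ ≤
          ∫ ω, dualU (U ω) (H ω) (b * ξ ω) ∂μ + w * |a - b| := by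
        have hint_a := hDint ξ hξ a ha.le
        have hint_b := hDint ξ hξ b hb.le
        have hint_ξH := hξHint ξ hξ
        have hmono : ∫ ω, dualU (U ω) (H ω) (a * ξ ω) ∂μ ≤
            ∫ ω, (dualU (U ω) (H ω) (b * ξ ω) + |a - b| * (ξ ω * H ω)) ∂μ := by
          apply integral_mono hint_a (hint_b.add (hint_ξH.const_mul _))
          intro ω
          have h1 := dualU_lip (hUmono ω) (hHpos ω).le
            (mul_nonneg ha.le (hDpos ξ hξ ω)) (mul_nonneg hb.le (hDpos ξ hξ ω))
            (f := U ω) (H := H ω)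
          have h2 : |a * ξ ω - b * ξ ω| = |a - b| * ξ ω := by
            rw [← sub_mul, abs_mul, abs_of_nonneg (hDpos ξ hξ ω)]
          simp only [Pi.add_apply]
          calc dualU (U ω) (H ω) (a * ξ ω)
              ≤ dualU (U ω) (H ω) (b * ξ ω) + H ω * |a * ξ ω - b * ξ ω| := h1
            _ = dualU (U ω) (H ω) (b * ξ ω) + |a - b| * (ξ ω * H ω) := by
                rw [h2]; ring
        rw [integral_add hint_b (hint_ξH.const_mul _), integral_const_mul] at hmono
        have h3 : |a - b| * ∫ ω, ξ ω * H ω ∂μ ≤ |a - b| * w :=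
          mul_le_mul_of_nonneg_left (hξHle ξ hξ) (abs_nonneg _)
        rw [mul_comm w]
        linarith
      have hA : sInf ((fun ξ => ∫ ω, dualU (U ω) (H ω) (a * ξ ω) ∂μ) '' D) ≤
          ∫ ω, dualU (U ω) (H ω) (a * ξ ω) ∂μ :=
        csInf_le ⟨0, hbelow a ha.le⟩ ⟨ξ, hξ, rfl⟩
      linarith
    linarith
  intro y₁ y₂ h1 h2
  rw [abs_sub_le_iff]
  constructor
  · linarith [key y₁ y₂ h1 h2]
  · have := key y₂ y₁ h2 h1
    rw [abs_sub_comm] at this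
    linarith
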